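/- arXiv:1809.10090 — 2 statements merged into one kernel-verified Lean document; each statement's English description precedes it below -/
import Mathlib

section
/- In a root system with simple system Δ and Weyl-invariant inner product (·,·), any set of quasi-fundamental weights {χ_α}_{α∈Δ} (i.e. (χ_α, β) = d_α·δ_{αβ} with d_α > 0 for all α, β ∈ Δ) has the property that each χ_α, written as a linear combination of the simple roots in Δ, has all coefficients strictly positive. -/
open RealInnerProductSpace

/-- In a root system with simple system `Δ` (here: a linearly
independent family `b : ι → V` of simple roots with pairwise non-positive inner
products, spanning an irreducible system, i.e. admitting no nontrivial partition into
mutually orthogonal parts), any set of quasi-fundamental weights `χ i`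
(i.e. `⟪χ i, b j⟫ = d i · δ_{ij}` with `d i > 0`, and `χ i` in the span of the simple
roots) has the property that each `χ i`, written as a linear combination of the simple
roots, has all coefficients strictly positive. -/
theorem quasi_fundamental_weights_pos_coeffs
    {V : Type*} [NormedAddCommGroup V] [InnerProductSpace ℝ V]
    {ι : Type*} [Fintype ι] [DecidableEq ι]
    (b : ι → V) (hli : LinearIndependent ℝ b)
    (hobtuse : ∀ i j, i ≠ j → ⟪b i, b j⟫ ≤ 0)
    (hirr : ∀ s : Set ι, (∀ i ∈ s, ∀ j ∉ s, ⟪b i, b j⟫ = 0) → s = ∅ ∨ s = Set.univ)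
    (d : ι → ℝ) (hd : ∀ i, 0 < d i)
    (χ : ι → V)
    (hχ : ∀ i j, ⟪χ i, b j⟫ = if i = j then d i else 0)
    (hspan : ∀ i, χ i ∈ Submodule.span ℝ (Set.range b))
    (i : ι) (c : ι → ℝ) (hc : χ i = ∑ j, c j • b j) :
    ∀ j, 0 < c j := by
  classical
  have key : ∀ k, ∑ j, c j * ⟪b j, b k⟫ = if i = k then d i else 0 := by
    intro k
    rw [← hχ i k, hc, sum_inner]
    simp [real_inner_smul_left]
  -- Step 1: all coefficients are nonnegative
  have hnonneg : ∀ j, 0 ≤ c j := by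
    by_contra h
    push_neg at h
    obtain ⟨j0, hj0⟩ := h
    set S : Finset ι := Finset.univ.filter (fun j => c j < 0) with hS
    set T : Finset ι := Finset.univ.filter (fun j => ¬ c j < 0) with hT
    set v : V := ∑ j ∈ S, c j • b j with hv
    set w : V := ∑ j ∈ T, c j • b j with hw
    have hvw : v + w = χ i := by
      rw [hc, hv, hw, hS, hT]
      exact Finset.sum_filter_add_sum_filter_not _ _ _
    have h1 : ⟪χ i, v⟫ ≤ 0 := by
      rw [hv, inner_sum]
      apply Finset.sum_nonpos
      intro j hj
      rw [real_inner_smul_right, hχ]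
      have hcj : c j < 0 := (Finset.mem_filter.mp hj).2
      split
      · next hij => exact le_of_lt (mul_neg_of_neg_of_pos hcj (hd i))
      · simp
    have h2 : 0 ≤ ⟪w, v⟫ := by
      rw [hw, hv, sum_inner]
      apply Finset.sum_nonneg
      intro j hj
      rw [inner_sum]
      apply Finset.sum_nonneg
      intro k hk
      rw [real_inner_smul_left, real_inner_smul_right]
      have hcj : ¬ c j < 0 := (Finset.mem_filter.mp hj).2
      have hck : c k < 0 := (Finset.mem_filter.mp hk).2
      have hjk : j ≠ k := by rintro rfl; exact hcj hck
      exact mul_nonneg (not_lt.mp hcj)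
        (mul_nonneg_of_nonpos_of_nonpos (le_of_lt hck) (hobtuse j k hjk))
    have hvv : ⟪v, v⟫ ≤ 0 := by
      have : ⟪v + w, v⟫ = ⟪v, v⟫ + ⟪w, v⟫ := inner_add_left _ _ _
      rw [hvw] at this
      linarith
    have hv0 : v = 0 := real_inner_self_nonpos.mp hvv
    have hv0' : ∑ j, (if c j < 0 then c j else 0) • b j = 0 := by
      rw [← hv0, hv, hS, Finset.sum_filter]
      congr 1
      ext j
      split <;> simp
    have := Fintype.linearIndependent_iff.mp hli _ hv0' j0
    rw [if_pos hj0] at this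
    exact absurd this (ne_of_lt hj0)
  -- Step 2: c i > 0
  have hci : 0 < c i := by
    have hk := key i
    rw [if_pos rfl] at hk
    have hsplit : ∑ j ∈ Finset.univ.erase i, c j * ⟪b j, b i⟫ + c i * ⟪b i, b i⟫
        = ∑ j, c j * ⟪b j, b i⟫ := Finset.sum_erase_add _ _ (Finset.mem_univ i)
    have hrest : ∑ j ∈ Finset.univ.erase i, c j * ⟪b j, b i⟫ ≤ 0 := by
      apply Finset.sum_nonpos
      intro j hj
      have hji : j ≠ i := (Finset.mem_erase.mp hj).1
      exact mul_nonpos_of_nonneg_of_nonpos (hnonneg j) (hobtuse j i hji)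
    have hdi : d i ≤ c i * ⟪b i, b i⟫ := by
      rw [← hk, ← hsplit]; linarith
    by_contra hle
    have hc0 : c i = 0 := le_antisymm (not_lt.mp hle) (hnonneg i)
    rw [hc0, zero_mul] at hdi
    exact absurd hdi (not_le.mpr (hd i))
  -- Step 3: irreducibility forces all coefficients nonzero
  set s : Set ι := {j | c j ≠ 0} with hs
  have hortho : ∀ j ∈ s, ∀ k ∉ s, ⟪b j, b k⟫ = 0 := by
    intro j hj k hk
    have hck : c k = 0 := not_not.mp hk
    have hik : i ≠ k := by rintro rfl; exact absurd hck (ne_of_gt hci)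
    have hsum : ∑ l, c l * ⟪b l, b k⟫ = 0 := by rw [key k, if_neg hik]
    have hterms : ∀ l ∈ Finset.univ, c l * ⟪b l, b k⟫ ≤ 0 := by
      intro l _
      by_cases hlk : l = k
      · rw [hlk, hck, zero_mul]
      · exact mul_nonpos_of_nonneg_of_nonpos (hnonneg l) (hobtuse l k hlk)
    have := (Finset.sum_eq_zero_iff_of_nonpos hterms).mp hsum j (Finset.mem_univ j)
    have hcj : c j ≠ 0 := hj
    exact (mul_eq_zero.mp this).resolve_left hcj
  rcases hirr s hortho with hs0 | hsu
  · exfalso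
    have : i ∈ s := ne_of_gt hci
    rw [hs0] at this
    exact this
  · intro j
    have hj : j ∈ s := by rw [hsu]; trivial
    exact lt_of_le_of_ne (hnonneg j) (Ne.symm hj)
end

section
/- Let Δ be a set of simple roots of a root system with Weyl-invariant inner product, let I ⊆ Δ, and let β ∈ Δ \ I. Then the orthogonal projection π₁(β) of β onto span(I), written as a linear combination of the projections π₁(α) = α for α ∈ I, has all coefficients non-positive. -/
open RealInnerProductSpace

/-- Let `Δ` be a set of simple roots of a root system with
Weyl-invariant inner product, `I ⊆ Δ` (here `I` is modelled by the linearly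
independent family `b : ι → V` of simple roots in `I`, with pairwise non-positive
inner products) and `β ∈ Δ \ I`, so that `⟪β, b i⟫ ≤ 0` for all `i`.  Then the
orthogonal projection `π₁ β` of `β` onto the span of `I`, written as a linear
combination of the simple roots `b i`, has all coefficients non-positive. -/
theorem projection_of_root_nonpos_coeffs
    {V : Type*} [NormedAddCommGroup V] [InnerProductSpace ℝ V] [FiniteDimensional ℝ V]
    {ι : Type*} [Fintype ι]
    (b : ι → V) (hli : LinearIndependent ℝ b)
    (hobtuse : ∀ i j, i ≠ j → ⟪b i, b j⟫ ≤ 0)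
    (β : V) (hβ : ∀ i, ⟪β, b i⟫ ≤ 0)
    (c : ι → ℝ)
    (hc : ((Submodule.orthogonalProjectionOnto (Submodule.span ℝ (Set.range b)) β) : V)
        = ∑ i, c i • b i) :
    ∀ i, c i ≤ 0 := by
  set K := Submodule.span ℝ (Set.range b) with hK
  set P : ι → ℝ := fun i => max (c i) 0 with hP
  set N : ι → ℝ := fun i => max (-c i) 0 with hN
  have hPnn : ∀ i, 0 ≤ P i := fun i => le_max_right _ _
  have hNnn : ∀ i, 0 ≤ N i := fun i => le_max_right _ _
  have hPN0 : ∀ i, P i * N i = 0 := by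
    intro i
    rcases le_total (c i) 0 with h | h
    · have : P i = 0 := by simp [hP, h]
      simp [this]
    · have : N i = 0 := by simp [hN, h]
      simp [this]
  have hPNc : ∀ i, c i = P i - N i := by
    intro i
    rcases le_total (c i) 0 with h | h
    · simp [hP, hN, h, max_eq_right, max_eq_left (neg_nonneg.2 h)]
    · simp [hP, hN, max_eq_left h, max_eq_right (neg_nonpos.2 h)]
  set v : V := ∑ i, P i • b i with hv
  set w : V := ∑ i, N i • b i with hw
  have hvmem : v ∈ K := by
    refine Submodule.sum_mem _ fun i _ => Submodule.smul_mem _ _ ?_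
    exact Submodule.subset_span ⟨i, rfl⟩
  -- π β = v - w
  have hproj : ((Submodule.orthogonalProjectionOnto K β : V)) = v - w := by
    rw [hc, hv, hw, ← Finset.sum_sub_distrib]
    refine Finset.sum_congr rfl fun i _ => ?_
    rw [hPNc i, sub_smul]
  -- ⟪π β, v⟫ = ⟪β, v⟫
  have hperp : ⟪β - (Submodule.orthogonalProjectionOnto K β : V), v⟫ = 0 :=
    K.starProjection_inner_eq_zero β v hvmem
  have h1 : ⟪(Submodule.orthogonalProjectionOnto K β : V), v⟫ = ⟪β, v⟫ := by
    rw [inner_sub_left] at hperp; linarith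
  have hβv : ⟪β, v⟫ ≤ 0 := by
    rw [hv, inner_sum]
    refine Finset.sum_nonpos fun i _ => ?_
    rw [real_inner_smul_right]
    exact mul_nonpos_of_nonneg_of_nonpos (hPnn i) (hβ i)
  have hwv : ⟪w, v⟫ ≤ 0 := by
    rw [hw, hv, sum_inner]
    refine Finset.sum_nonpos fun i _ => ?_
    rw [real_inner_smul_left, inner_sum]
    simp_rw [real_inner_smul_right]
    rw [Finset.mul_sum]
    refine Finset.sum_nonpos fun j _ => ?_
    rcases eq_or_ne i j with rfl | hij
    · have := hPN0 i
      nlinarith [real_inner_self_nonneg (x := b i)]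
    · have h2 := hobtuse i j hij
      have := mul_nonneg (hNnn i) (hPnn j)
      nlinarith
  have hvv : ⟪v, v⟫ ≤ 0 := by
    have : v = (Submodule.orthogonalProjectionOnto K β : V) + w := by rw [hproj]; abel
    calc ⟪v, v⟫ = ⟪(Submodule.orthogonalProjectionOnto K β : V), v⟫ + ⟪w, v⟫ := by
          rw [this, inner_add_left]
      _ ≤ 0 := by linarith
  have hv0 : v = 0 := by
    have := real_inner_self_nonneg (x := v)
    have h0 : ⟪v, v⟫ = 0 := le_antisymm hvv this
    exact inner_self_eq_zero.mp h0
  have hPzero : ∀ i, P i = 0 := by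
    have := (Fintype.linearIndependent_iff.mp hli) P (by rw [← hv]; exact hv0)
    exact this
  intro i
  have := hPzero i
  have : max (c i) 0 = 0 := this
  by_contra h
  push_neg at h
  have : P i = c i := max_eq_left (le_of_lt h)
  have := hPzero i
  linarith [hPzero i, (max_eq_left (le_of_lt h) : P i = c i)]
end
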